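/- For a supported permutation set X, the atoms-abstraction set [𝔸]X = {[a]x | a ∈ 𝔸, x ∈ X}, with permutation action π·[a]x = [π(a)](π·x), is a well-defined supported permutation set, and supp([a]x) = supp(x) \ {a}. -/
import Mathlib


abbrev Atom := ℕ

def FinPermGroup : Subgroup (Equiv.Perm Atom) where
  carrier := {π | {a | π a ≠ a}.Finite}
  one_mem' := by simp
  mul_mem' := by
    intro π π' hπ hπ'
    refine Set.Finite.subset (Set.Finite.union hπ hπ') fun a ha => ?_
    by_contra h
    simp only [Set.mem_union, Set.mem_setOf_eq, not_or, not_not] at h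
    exact ha (show π (π' a) = a by rw [h.2, h.1])
  inv_mem' := by
    intro π hπ
    have h : {a | π⁻¹ a ≠ a} = {a | π a ≠ a} := by
      ext a
      simp only [Set.mem_setOf_eq, ne_eq, not_iff_not]
      rw [Equiv.Perm.inv_eq_iff_eq, eq_comm]
    show {a | π⁻¹ a ≠ a}.Finite
    rw [h]; exact hπ

abbrev FinPerm : Type := FinPermGroup

def PSupports {X : Type*} [MulAction FinPerm X] (A : Set Atom) (x : X) : Prop :=
  ∀ π π' : FinPerm, (∀ a ∈ A, π.1 a = π'.1 a) → π • x = π' • x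

def PIsLeastSupport {X : Type*} [MulAction FinPerm X] (S : Set Atom) (x : X) : Prop :=
  PSupports S x ∧ ∀ A, PSupports A x → S ⊆ A

def IsPermissionSet (S : Set Atom) : Prop :=
  ∃ A B : Finset Atom, (↑A : Set Atom) ⊆ {n | n % 2 = 1} ∧ (↑B : Set Atom) ⊆ {n | n % 2 = 0} ∧
    S = ({n : Atom | n % 2 = 0} ∪ ↑A) \ ↑B

def swapPerm (a b : Atom) : FinPerm :=
  ⟨Equiv.swap a b, by
    show {c | Equiv.swap a b c ≠ c}.Finite
    apply Set.Finite.subset ((Set.finite_singleton b).insert a)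
    intro c hc
    by_contra hn
    simp only [Set.mem_insert_iff, Set.mem_singleton_iff, not_or] at hn
    exact hc (Equiv.swap_apply_of_ne_of_ne hn.1 hn.2)⟩

instance : SMul FinPerm Atom := ⟨fun π a => π.1 a⟩
instance : MulAction FinPerm Atom where
  one_smul _ := rfl
  mul_smul _ _ _ := rfl

/-- Atoms-abstraction in a permutation set: `[a]x`. -/
def pabs {X : Type*} [MulAction FinPerm X] (supp : X → Set Atom) (a : Atom) (x : X) :
    Set (Atom × X) :=
  {p | p = (a, x)} ∪ {p | ∃ b, b ∉ supp x ∧ p = (b, swapPerm b a • x)}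

section Helpers

open Pointwise

variable {X : Type*} [MulAction FinPerm X]

lemma FinPerm.ext' {π π' : FinPerm} (h : ∀ a, π.1 a = π'.1 a) : π = π' :=
  Subtype.ext (Equiv.ext h)

@[simp] lemma FinPerm.coe_mul_apply (π π' : FinPerm) (a : Atom) :
    ((π * π').1) a = π.1 (π'.1 a) := rfl

@[simp] lemma FinPerm.coe_one_apply (a : Atom) : ((1 : FinPerm).1) a = a := rfl

@[simp] lemma FinPerm.coe_inv_apply (π : FinPerm) (a : Atom) :
    ((π⁻¹ : FinPerm).1) a = π.1.symm a := rfl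

@[simp] lemma swapPerm_coe (a b c : Atom) : (swapPerm a b).1 c = Equiv.swap a b c := rfl

lemma swapPerm_self (a : Atom) : swapPerm a a = 1 :=
  FinPerm.ext' fun c => by simp

lemma swapPerm_comm (a b : Atom) : swapPerm a b = swapPerm b a :=
  FinPerm.ext' fun c => by simp [Equiv.swap_comm]

lemma swapPerm_mul_self (a b : Atom) : swapPerm a b * swapPerm a b = 1 :=
  FinPerm.ext' fun c => by simp

lemma swapPerm_smul_smul (a b : Atom) (x : X) : swapPerm a b • swapPerm a b • x = x := by
  rw [smul_smul, swapPerm_mul_self, one_smul]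

lemma swapPerm_conj (π : FinPerm) (a b : Atom) :
    π * swapPerm a b = swapPerm (π.1 a) (π.1 b) * π := by
  apply FinPerm.ext'; intro c
  simp only [FinPerm.coe_mul_apply, swapPerm_coe]
  by_cases hca : c = a
  · subst hca; simp
  by_cases hcb : c = b
  · subst hcb; simp
  rw [Equiv.swap_apply_of_ne_of_ne hca hcb,
      Equiv.swap_apply_of_ne_of_ne (fun h => hca (π.1.injective h))
        (fun h => hcb (π.1.injective h))]

lemma psupports_iff' {A : Set Atom} {x : X} :
    PSupports A x ↔ ∀ σ : FinPerm, (∀ a ∈ A, σ.1 a = a) → σ • x = x := by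
  constructor
  · intro h σ hσ
    simpa using h σ 1 (fun a ha => by simpa using hσ a ha)
  · intro h π π' hag
    have h1 : ∀ a ∈ A, ((π'⁻¹ * π).1) a = a := fun a ha => by
      simp [hag a ha]
    have h2 := h _ h1
    have h3 : π' • (π'⁻¹ * π) • x = π' • x := by rw [h2]
    rwa [smul_smul, mul_inv_cancel_left] at h3

lemma PSupports.image {A : Set Atom} {x : X} (h : PSupports A x) (π : FinPerm) :
    PSupports (π.1 '' A) (π • x) := by
  rw [psupports_iff'] at h ⊢
  intro σ hσ
  have h1 : ∀ a ∈ A, ((π⁻¹ * σ * π).1) a = a := by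
    intro a ha
    have := hσ (π.1 a) ⟨a, ha, rfl⟩
    simp [this]
  have h2 := h _ h1
  calc σ • π • x = π • (π⁻¹ * σ * π) • x := by
        rw [smul_smul, smul_smul]; congr 1; group
    _ = π • x := by rw [h2]

lemma supp_smul_eq (supp : X → Set Atom) (hsupp : ∀ x, PIsLeastSupport (supp x) x)
    (π : FinPerm) (x : X) : supp (π • x) = π.1 '' supp x := by
  apply Set.Subset.antisymm
  · exact (hsupp (π • x)).2 _ ((hsupp x).1.image π)
  · have h0 : PSupports ((π⁻¹ : FinPerm).1 '' supp (π • x)) x := by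
      have := (hsupp (π • x)).1.image π⁻¹
      rwa [inv_smul_smul] at this
    have h1 := (hsupp x).2 _ h0
    rintro c ⟨e, he, rfl⟩
    obtain ⟨d, hd, hde⟩ := h1 he
    have : π.1 e = d := by rw [← hde]; simp
    rwa [this]

lemma pabs_smul' (supp : X → Set Atom) (hsupp : ∀ x, PIsLeastSupport (supp x) x)
    (π : FinPerm) (a : Atom) (x : X) :
    π • pabs supp a x = pabs supp (π.1 a) (π • x) := by
  ext p
  simp only [Set.mem_smul_set, pabs, Set.mem_union, Set.mem_setOf_eq]
  constructor
  · rintro ⟨q, (rfl | ⟨b, hb, rfl⟩), rfl⟩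
    · left; rfl
    · right
      refine ⟨π.1 b, ?_, ?_⟩
      · rw [supp_smul_eq supp hsupp]
        rintro ⟨e, he, hee⟩
        exact hb (by rwa [← π.1.injective hee])
      · show π • (b, swapPerm b a • x) = _
        have : π • (swapPerm b a • x) = swapPerm (π.1 b) (π.1 a) • (π • x) := by
          rw [smul_smul, swapPerm_conj, mul_smul]
        rw [Prod.smul_def, this]
        rfl
  · rintro (rfl | ⟨c, hc, rfl⟩)
    · exact ⟨(a, x), Or.inl rfl, rfl⟩
    · refine ⟨(π.1.symm c, swapPerm (π.1.symm c) a • x), Or.inr ⟨π.1.symm c, ?_, rfl⟩, ?_⟩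
      · intro h
        rw [supp_smul_eq supp hsupp] at hc
        exact hc ⟨_, h, π.1.apply_symm_apply c⟩
      · show π • (π.1.symm c, swapPerm (π.1.symm c) a • x)
            = (c, swapPerm c (π.1 a) • (π • x))
        have h1 : π • (swapPerm (π.1.symm c) a • x) = swapPerm c (π.1 a) • (π • x) := by
          rw [smul_smul, swapPerm_conj, π.1.apply_symm_apply, mul_smul]
        rw [Prod.smul_def, h1]
        show (π.1 (π.1.symm c), _) = _
        rw [π.1.apply_symm_apply]

lemma pabs_swap_subset (supp : X → Set Atom) (hsupp : ∀ x, PIsLeastSupport (supp x) x)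
    {a b : Atom} {x : X} (hb : b ∉ supp x) :
    pabs supp b (swapPerm b a • x) ⊆ pabs supp a x := by
  intro p hp
  simp only [pabs, Set.mem_union, Set.mem_setOf_eq] at hp ⊢
  rcases hp with hp | ⟨c, hc, rfl⟩
  · exact Or.inr ⟨b, hb, hp⟩
  · by_cases hca : c = a
    · subst hca
      left
      have h1 : swapPerm c b • swapPerm b c • x = x := by
        rw [swapPerm_comm c b, swapPerm_smul_smul]
      rw [h1]
    · by_cases hcb : c = b
      · subst hcb
        exact Or.inr ⟨c, hb, by rw [swapPerm_self, one_smul]⟩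
      · rw [supp_smul_eq supp hsupp] at hc
        have hcs : c ∉ supp x := fun h =>
          hc ⟨c, h, by simp [Equiv.swap_apply_of_ne_of_ne hcb hca]⟩
        have key : (swapPerm c b * swapPerm b a) • x = swapPerm c a • x := by
          apply (hsupp x).1
          intro e he
          have heb : e ≠ b := fun h => hb (h ▸ he)
          have hec : e ≠ c := fun h => hcs (h ▸ he)
          by_cases hea : e = a
          · subst hea
            simp
          · simp only [FinPerm.coe_mul_apply, swapPerm_coe]
            rw [Equiv.swap_apply_of_ne_of_ne heb hea,
                Equiv.swap_apply_of_ne_of_ne hec heb,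
                Equiv.swap_apply_of_ne_of_ne hec hea]
        right
        exact ⟨c, hcs, by rw [smul_smul, key]⟩

lemma pabs_swap_eq (supp : X → Set Atom) (hsupp : ∀ x, PIsLeastSupport (supp x) x)
    {a b : Atom} {x : X} (hb : b ∉ supp x) :
    pabs supp b (swapPerm b a • x) = pabs supp a x := by
  apply Set.Subset.antisymm (pabs_swap_subset supp hsupp hb)
  have ha : a ∉ supp (swapPerm b a • x) := by
    rw [supp_smul_eq supp hsupp]
    rintro ⟨e, he, hee⟩
    simp only [swapPerm_coe] at hee
    have heB : e = b := by
      have := congrArg (Equiv.swap b a) hee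
      simpa using this
    exact hb (heB ▸ he)
  have hx : swapPerm a b • (swapPerm b a • x) = x := by
    rw [swapPerm_comm a b, swapPerm_smul_smul]
  have hsub := pabs_swap_subset supp hsupp (a := b) (x := swapPerm b a • x) ha
  rwa [hx] at hsub

end Helpers

open Pointwise in
theorem stmt12 {X : Type*} [MulAction FinPerm X] (supp : X → Set Atom)
    (hsupp : ∀ x, PIsLeastSupport (supp x) x) (a : Atom) (x : X) (π : FinPerm) :
    π • pabs supp a x = pabs supp (π.1 a) (π • x) ∧
    PIsLeastSupport (supp x \ {a}) (pabs supp a x) := by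
  refine ⟨pabs_smul' supp hsupp π a x, ?_, ?_⟩
  · rw [psupports_iff']
    intro σ hσ
    rw [pabs_smul' supp hsupp]
    by_cases h : σ.1 a = a
    · have hx : σ • x = x := by
        apply psupports_iff'.mp (hsupp x).1 σ
        intro e he
        by_cases hea : e = a
        · exact hea ▸ h
        · exact hσ e ⟨he, hea⟩
      rw [h, hx]
    · set b := σ.1 a with hb
      have hbs : b ∉ supp x := by
        intro hmem
        have hba : b ≠ a := h
        have h2 := hσ b ⟨hmem, hba⟩
        exact hba (σ.1.injective (h2.trans hb))
      have hx : σ • x = swapPerm b a • x := by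
        apply (hsupp x).1
        intro e he
        by_cases hea : e = a
        · subst hea
          simp [← hb]
        · have heb : e ≠ b := fun hh => hbs (hh ▸ he)
          rw [hσ e ⟨he, hea⟩, swapPerm_coe, Equiv.swap_apply_of_ne_of_ne heb hea]
      rw [hx, pabs_swap_eq supp hsupp hbs]
  · intro A hA
    have hx : PSupports (A ∪ {a}) x := by
      rw [psupports_iff']
      intro σ hσ
      have h1 : σ • pabs supp a x = pabs supp a x :=
        psupports_iff'.mp hA σ (fun e he => hσ e (Or.inl he))
      have ha : σ.1 a = a := hσ a (Or.inr rfl)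
      rw [pabs_smul' supp hsupp, ha] at h1
      have hmem : (a, σ • x) ∈ pabs supp a x := by
        rw [← h1]; left; rfl
      simp only [pabs, Set.mem_union, Set.mem_setOf_eq] at hmem
      rcases hmem with h2 | ⟨b, hb2, h2⟩
      · exact congrArg Prod.snd h2
      · have hba : a = b := congrArg Prod.fst h2
        have h3 := congrArg Prod.snd h2
        rw [← hba, swapPerm_self, one_smul] at h3
        exact h3
    have hsub := (hsupp x).2 _ hx
    intro c hc
    rcases hsub hc.1 with h | h
    · exact h
    · exact absurd h hc.2
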